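/- Let f = Σ_{i≥0} a_i T^{-i} ∈ F_2((T^{-1})) be the unique solution with |f| < 1 of X⁴ + X + T/(T⁴+1) = 0. Then the coefficients satisfy: a_0 = 0, a_1 = 0, a_2 = 0, a_3 = 1; a_{i+4} = a_i whenever i is not divisible by 4; and a_{i+1} + a_i + a_{4i+4} + a_{4i} = 0 for all i ≥ 0. Consequently a_{4i+1} = 0, a_{4i+2} = 0, and a_{4i+3} = 1 for all i ≥ 0. -/

import Mathlib

open Polynomial LaurentSeries
open scoped Classical

/-- The absolute value `|f| = |T|^{-i₀}` on `F((T⁻¹))`; `|0| = 0`, `t = |T| > 1` fixed. -/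
noncomputable def lAbs {F : Type*} [Field F] (t : ℝ) (f : LaurentSeries F) : ℝ :=
  if f = 0 then 0 else t ^ (-f.order)

open Finset

lemma zmod2_mul_self (a : ZMod 2) : a * a = a := by revert a; decide

lemma sq_coeff_even (x : LaurentSeries (ZMod 2)) (n : ℤ) :
    (x * x).coeff (2 * n) = x.coeff n := by
  classical
  rw [HahnSeries.coeff_mul]
  set s := Finset.antidiagonal x.isPWO_support x.isPWO_support (2 * n) with hs
  have hswap : ∀ p : ℤ × ℤ, p ∈ s → p.swap ∈ s := by
    intro p hp
    rw [hs, Finset.swap_mem_addAntidiagonal]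
    rwa [hs] at hp
  by_cases hd : ((n, n) : ℤ × ℤ) ∈ s
  · rw [← Finset.sum_erase_add s _ hd]
    have h0 : ∑ ij ∈ s.erase (n, n), x.coeff ij.1 * x.coeff ij.2 = 0 := by
      apply Finset.sum_involution (fun p _ => p.swap)
      · intro p _
        simp only [Prod.fst_swap, Prod.snd_swap]
        rw [mul_comm]
        exact CharTwo.add_self_eq_zero _
      · intro p hp _
        intro hcon
        have h1 : p.1 = p.2 := congrArg Prod.snd hcon
        have hps : p.1 + p.2 = 2 * n := by
          have := (Finset.mem_erase.mp hp).2
          rw [hs, Finset.mem_addAntidiagonal] at this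
          exact this.2.2
        have : p = (n, n) := by
          have : p.1 = n := by omega
          have h2 : p.2 = n := by omega
          exact Prod.ext this h2
        exact (Finset.mem_erase.mp hp).1 this
      · intro p _; exact Prod.swap_swap p
      · intro p hp
        rcases Finset.mem_erase.mp hp with ⟨hne, hmem⟩
        refine Finset.mem_erase.mpr ⟨?_, hswap p hmem⟩
        intro hcon
        apply hne
        have := congrArg Prod.swap hcon
        simpa using this
    rw [h0, zero_add, zmod2_mul_self]
  · have hn : x.coeff n = 0 := by
      by_contra hcon
      apply hd
      rw [hs, Finset.mem_addAntidiagonal]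
      exact ⟨hcon, hcon, by ring⟩
    rw [hn]
    apply Finset.sum_involution (fun p _ => p.swap)
    · intro p _
      simp only [Prod.fst_swap, Prod.snd_swap]
      rw [mul_comm]
      exact CharTwo.add_self_eq_zero _
    · intro p hp _ hcon
      have h1 : p.1 = p.2 := congrArg Prod.snd hcon
      have hps : p.1 + p.2 = 2 * n := by
        rw [hs, Finset.mem_addAntidiagonal] at hp
        exact hp.2.2
      have hp1 : p.1 = n := by omega
      apply hd
      have : p = (n, n) := Prod.ext hp1 (by omega)
      rwa [this] at hp
    · intro p _; exact Prod.swap_swap p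
    · intro p hp; exact hswap p hp

lemma sq_coeff_odd (x : LaurentSeries (ZMod 2)) (m : ℤ) (h : ¬ (2 ∣ m)) :
    (x * x).coeff m = 0 := by
  classical
  rw [HahnSeries.coeff_mul]
  apply Finset.sum_involution (fun p _ => p.swap)
  · intro p _
    simp only [Prod.fst_swap, Prod.snd_swap]
    rw [mul_comm]
    exact CharTwo.add_self_eq_zero _
  · intro p hp _ hcon
    have h1 : p.1 = p.2 := congrArg Prod.snd hcon
    rw [Finset.mem_addAntidiagonal] at hp
    exact h ⟨p.1, by omega⟩
  · intro p _; exact Prod.swap_swap p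
  · intro p hp
    rwa [Finset.swap_mem_addAntidiagonal]

section Aux2

lemma f4_coeff_mul4 (f : LaurentSeries (ZMod 2)) (k : ℤ) :
    (f ^ 4).coeff (4 * k) = f.coeff k := by
  have h : f ^ 4 = (f * f) * (f * f) := by ring
  rw [h, show (4 : ℤ) * k = 2 * (2 * k) by ring, sq_coeff_even, sq_coeff_even]

lemma f4_coeff_not4 (f : LaurentSeries (ZMod 2)) (m : ℤ) (h : ¬ (4 ∣ m)) :
    (f ^ 4).coeff m = 0 := by
  have h4 : f ^ 4 = (f * f) * (f * f) := by ring
  rw [h4]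
  by_cases h2 : 2 ∣ m
  · obtain ⟨n, rfl⟩ := h2
    rw [sq_coeff_even]
    exact sq_coeff_odd f n (by omega)
  · exact sq_coeff_odd (f * f) m h2

lemma zmod2_helper1 : ∀ a b c : ZMod 2, a + b + c = 0 → a = b + c := by decide
lemma zmod2_helper2 : ∀ a b : ZMod 2, a + b = 0 → b = a := by decide
lemma zmod2_helper3 : ∀ x y : ZMod 2, x + y + x + y = 0 := by decide

end Aux2


/-- Coefficient relations for the unique solution with `|f| < 1` of
`X⁴ + X + T/(T⁴+1) = 0` over `F₂`: writing `f = Σ_{i≥0} a_i T^{-i}`, one has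
`a₀ = a₁ = a₂ = 0`, `a₃ = 1`, `a_{i+4} = a_i` when `4 ∤ i`,
`a_{i+1} + a_i + a_{4i+4} + a_{4i} = 0`, and consequently
`a_{4i+1} = 0`, `a_{4i+2} = 0`, `a_{4i+3} = 1` for all `i`. -/
theorem coefficients_of_solution (t : ℝ) (ht : 1 < t)
    (T : LaurentSeries (ZMod 2)) (hT : T = HahnSeries.single (-1 : ℤ) (1 : ZMod 2))
    (f : LaurentSeries (ZMod 2))
    (hf1 : lAbs t f < 1) (hf2 : f ^ 4 + f + T / (T ^ 4 + 1) = 0)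
    (a : ℕ → ZMod 2) (ha : ∀ i : ℕ, a i = f.coeff (i : ℤ)) :
    a 0 = 0 ∧ a 1 = 0 ∧ a 2 = 0 ∧ a 3 = 1 ∧
      (∀ i : ℕ, ¬ (4 ∣ i) → a (i + 4) = a i) ∧
      (∀ i : ℕ, a (i + 1) + a i + a (4 * i + 4) + a (4 * i) = 0) ∧
      (∀ i : ℕ, a (4 * i + 1) = 0 ∧ a (4 * i + 2) = 0 ∧ a (4 * i + 3) = 1) := by
  classical
  -- T^4 = single (-4) 1
  have hT4 : T ^ 4 = HahnSeries.single (-4 : ℤ) (1 : ZMod 2) := by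
    subst hT
    rw [show (HahnSeries.single (-1 : ℤ) (1 : ZMod 2)) ^ 4 =
      ((HahnSeries.single (-1 : ℤ) (1 : ZMod 2) * HahnSeries.single (-1 : ℤ) (1 : ZMod 2)) *
        HahnSeries.single (-1 : ℤ) (1 : ZMod 2)) * HahnSeries.single (-1 : ℤ) (1 : ZMod 2)
      from by ring, HahnSeries.single_mul_single, HahnSeries.single_mul_single,
      HahnSeries.single_mul_single]
    norm_num
  -- T^4 + 1 ≠ 0
  have hD : T ^ 4 + 1 ≠ 0 := by
    intro h
    have := congrArg (fun x : LaurentSeries (ZMod 2) => x.coeff (-4)) h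
    simp [hT4, HahnSeries.coeff_add, HahnSeries.coeff_single, HahnSeries.coeff_one] at this
  -- f ≠ 0
  have hf0 : f ≠ 0 := by
    intro h
    rw [h] at hf2
    have h2 : T / (T ^ 4 + 1) = 0 := by
      simpa only [ne_eq, OfNat.ofNat_ne_zero, not_false_eq_true, zero_pow, add_zero,
        zero_add] using hf2
    rcases _root_.div_eq_zero_iff.mp h2 with h1 | h1
    · rw [hT] at h1
      exact HahnSeries.single_ne_zero one_ne_zero h1
    · exact hD h1
  -- order f > 0
  have horder : 0 < f.order := by
    by_contra hcon
    push_neg at hcon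
    have h1 : (0 : ℤ) ≤ -f.order := by omega
    have : (1 : ℝ) ≤ t ^ (-f.order) := one_le_zpow₀ (le_of_lt ht) h1
    rw [lAbs, if_neg hf0] at hf1
    linarith
  have hcoeff0 : ∀ n : ℤ, n ≤ 0 → f.coeff n = 0 := fun n hn =>
    HahnSeries.coeff_eq_zero_of_lt_order (lt_of_le_of_lt hn horder)
  -- master equation
  set g : LaurentSeries (ZMod 2) := f ^ 4 + f with hg
  have key : g * T ^ 4 + g + T = 0 := by
    have h1 : (f ^ 4 + f + T / (T ^ 4 + 1)) * (T ^ 4 + 1) = 0 := by rw [hf2, zero_mul]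
    rw [add_mul, div_mul_cancel₀ _ hD] at h1
    calc g * T ^ 4 + g + T = (f ^ 4 + f) * (T ^ 4 + 1) + T := by rw [hg]; ring
    _ = 0 := h1
  -- recurrence on coefficients of g
  have grec : ∀ n : ℤ, g.coeff (n + 4) = g.coeff n + (if n = -1 then 1 else 0) := by
    intro n
    have h1 : (g * T ^ 4).coeff n + g.coeff n + T.coeff n = 0 := by
      rw [← HahnSeries.coeff_add, ← HahnSeries.coeff_add, key, HahnSeries.coeff_zero]
    have h2 : (g * T ^ 4).coeff n = g.coeff (n + 4) := by
      rw [hT4]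
      have := HahnSeries.coeff_mul_single_add (r := (1 : ZMod 2)) (x := g)
        (a := n + 4) (b := -4)
      rw [show n + 4 + -4 = n by ring, mul_one] at this
      rw [this]
    rw [h2] at h1
    have h3 := zmod2_helper1 _ _ _ h1
    rw [h3, hT]
    simp [HahnSeries.coeff_single]
  -- g vanishes at nonpositive indices
  have gzero : ∀ n : ℤ, n ≤ 0 → g.coeff n = 0 := by
    intro n hn
    rw [hg, HahnSeries.coeff_add, hcoeff0 n hn, add_zero]
    by_cases h4 : 4 ∣ n
    · obtain ⟨k, rfl⟩ := h4
      rw [f4_coeff_mul4]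
      exact hcoeff0 k (by omega)
    · exact f4_coeff_not4 f n h4
  -- values of g
  have gval : ∀ j : ℕ, g.coeff (j : ℤ) = if j % 4 = 3 then 1 else 0 := by
    intro j
    induction j using Nat.strong_induction_on with
    | _ j ih =>
      by_cases hj : j < 4
      · have h1 := grec ((j : ℤ) - 4)
        rw [show (j : ℤ) - 4 + 4 = (j : ℤ) by ring, gzero ((j : ℤ) - 4) (by omega),
          zero_add] at h1
        rw [h1]
        interval_cases j <;> norm_num
      · push_neg at hj
        obtain ⟨m, rfl⟩ : ∃ m, j = m + 4 := ⟨j - 4, by omega⟩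
        have h1 := grec (m : ℤ)
        rw [show (m : ℤ) + 4 = ((m + 4 : ℕ) : ℤ) by push_cast; ring] at h1
        rw [h1, if_neg (by omega : ¬ (m : ℤ) = -1), add_zero, ih m (by omega),
          show (m + 4) % 4 = m % 4 from by omega]
  -- values of f
  have fval12 : ∀ j : ℕ, (j % 4 = 1 ∨ j % 4 = 2) → f.coeff (j : ℤ) = 0 := by
    intro j hj
    have h1 : g.coeff (j : ℤ) = 0 := by rw [gval]; simp only [ite_eq_right_iff]; omega
    rw [hg, HahnSeries.coeff_add, f4_coeff_not4 f _ (by omega : ¬ (4 : ℤ) ∣ (j : ℤ)),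
      zero_add] at h1
    exact h1
  have fval3 : ∀ j : ℕ, j % 4 = 3 → f.coeff (j : ℤ) = 1 := by
    intro j hj
    have h1 : g.coeff (j : ℤ) = 1 := by rw [gval, if_pos hj]
    rw [hg, HahnSeries.coeff_add, f4_coeff_not4 f _ (by omega : ¬ (4 : ℤ) ∣ (j : ℤ)),
      zero_add] at h1
    exact h1
  have fval4 : ∀ j : ℕ, f.coeff ((4 * j : ℕ) : ℤ) = f.coeff (j : ℤ) := by
    intro j
    have h1 : g.coeff ((4 * j : ℕ) : ℤ) = 0 := by
      rw [gval]; simp only [ite_eq_right_iff]; omega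
    rw [hg, HahnSeries.coeff_add, show ((4 * j : ℕ) : ℤ) = 4 * (j : ℤ) by push_cast; ring,
      f4_coeff_mul4] at h1
    have := zmod2_helper2 _ _ h1
    rw [show ((4 * j : ℕ) : ℤ) = 4 * (j : ℤ) by push_cast; ring, this]
  -- assemble
  have ha0 : a 0 = 0 := by rw [ha]; exact hcoeff0 0 le_rfl
  have ha1 : a 1 = 0 := by rw [ha]; exact fval12 1 (by omega)
  have ha2 : a 2 = 0 := by rw [ha]; exact fval12 2 (by omega)
  have ha3 : a 3 = 1 := by rw [ha]; exact fval3 3 (by omega)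
  have hres : ∀ j : ℕ, ¬ (4 ∣ j) → a j = if j % 4 = 3 then 1 else 0 := by
    intro j hj
    rw [ha]
    by_cases h3 : j % 4 = 3
    · rw [if_pos h3]; exact fval3 j h3
    · rw [if_neg h3]; exact fval12 j (by omega)
  refine ⟨ha0, ha1, ha2, ha3, ?_, ?_, ?_⟩
  · intro i hi
    rw [hres i hi, hres (i + 4) (by omega), show (i + 4) % 4 = i % 4 from by omega]
  · intro i
    have h1 : a (4 * i + 4) = a (i + 1) := by
      rw [ha, ha, show (4 * i + 4 : ℕ) = 4 * (i + 1) by ring]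
      exact fval4 (i + 1)
    have h2 : a (4 * i) = a i := by rw [ha, ha]; exact fval4 i
    rw [h1, h2]
    exact zmod2_helper3 _ _
  · intro i
    refine ⟨?_, ?_, ?_⟩
    · rw [ha]; exact fval12 _ (by omega)
    · rw [ha]; exact fval12 _ (by omega)
    · rw [ha]; exact fval3 _ (by omega)
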